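/- If n is odd and n ≥ 9, then ⟨r_n, r_{n-4}, r_3⟩ is a proper subgroup of Sym_n: the orbit of 1 under the natural action contains only elements congruent to 1 or 3 modulo 4, in particular contains no even integer. -/

import Mathlib

/-- The prefix reversal `r i` on positions `1..n` (0-indexed as `Fin n`):
position `x+1 ↦ i+1-(x+1)` for `x+1 ≤ i`, i.e. `x ↦ i-1-x` for `x < i`, fixing the rest. -/
def pr (n i : ℕ) : Equiv.Perm (Fin n) :=
  Function.Involutive.toPerm
    (fun x => if h : x.val < i ∧ i ≤ n then ⟨i - 1 - x.val, by omega⟩ else x)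
    (by
      intro x
      apply Fin.ext
      dsimp only
      split_ifs with h1 h2 h3 <;> simp_all <;> omega)

theorem stmt16 (n : ℕ) (hodd : Odd n) (hn : 9 ≤ n) :
    (∀ g ∈ Subgroup.closure ({pr n n, pr n (n - 4), pr n 3} : Set (Equiv.Perm (Fin n))),
      ((g (⟨0, by omega⟩ : Fin n)).val + 1) % 4 = 1 ∨
      ((g (⟨0, by omega⟩ : Fin n)).val + 1) % 4 = 3) ∧
    (∀ g ∈ Subgroup.closure ({pr n n, pr n (n - 4), pr n 3} : Set (Equiv.Perm (Fin n))),
      ¬ Even ((g (⟨0, by omega⟩ : Fin n)).val + 1)) ∧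
    Subgroup.closure ({pr n n, pr n (n - 4), pr n 3} : Set (Equiv.Perm (Fin n))) ≠ ⊤ := by
  have hn2 : n % 2 = 1 := Nat.odd_iff.mp hodd
  have key : ∀ g ∈ Subgroup.closure ({pr n n, pr n (n - 4), pr n 3} : Set (Equiv.Perm (Fin n))),
      ∀ x : Fin n, (g x).val % 2 = x.val % 2 := by
    intro g hg
    induction hg using Subgroup.closure_induction with
    | mem g hg =>
      intro x
      have hx := x.isLt
      obtain h | h | h := hg <;> subst h <;>
        simp only [pr, Function.Involutive.toPerm, Equiv.coe_fn_mk] <;>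
        split_ifs with h <;> simp <;> omega
    | one => intro x; rfl
    | mul a b _ _ ha hb =>
      intro x
      rw [Equiv.Perm.mul_apply, ha, hb]
    | inv a _ ha =>
      intro x
      have := ha (a⁻¹ x)
      simpa using this.symm
  refine ⟨?_, ?_, ?_⟩
  · intro g hg
    have h := key g hg ⟨0, by omega⟩
    simp only [Fin.val_mk] at h ⊢
    omega
  · intro g hg
    have h := key g hg ⟨0, by omega⟩
    simp only [Fin.val_mk] at h ⊢
    rw [Nat.even_add_one]
    simp [Nat.even_iff]
    omega
  · intro htop
    have hmem : Equiv.swap (⟨0, by omega⟩ : Fin n) ⟨1, by omega⟩ ∈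
        Subgroup.closure ({pr n n, pr n (n - 4), pr n 3} : Set (Equiv.Perm (Fin n))) := by
      rw [htop]; trivial
    have := key _ hmem ⟨0, by omega⟩
    rw [Equiv.swap_apply_left] at this
    simp at this
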